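/- For every prime number p, the quadratic form x₁² + x₂² + x₃² + x₄² in four variables over the field ℚ_p of p-adic numbers is equivalent (isometric) to the quadratic form −x₁² − x₂² − x₃² − x₄². -/

import Mathlib

open Polynomial in
lemma exists_sum_four_squares_eq_neg_one (p : ℕ) [hp : Fact p.Prime] :
    ∃ a b c d : ℚ_[p], a ^ 2 + b ^ 2 + c ^ 2 + d ^ 2 = -1 := by
  by_cases hp2 : p = 2
  · subst hp2
    have hn : ‖(X ^ 2 + C 7 : Polynomial ℤ_[2]).eval 1‖ <
        ‖(X ^ 2 + C 7 : Polynomial ℤ_[2]).derivative.eval 1‖ ^ 2 := by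
      have h8 : ((X ^ 2 + C 7 : Polynomial ℤ_[2]).eval 1) = 8 := by simp; norm_num
      have hd : ((X ^ 2 + C 7 : Polynomial ℤ_[2]).derivative.eval 1) = 2 := by
        simp [derivative_X_pow]; norm_num
      rw [h8, hd]
      have h2 : ‖(2 : ℤ_[2])‖ = 2⁻¹ := by
        have := @PadicInt.norm_p 2 _
        simpa using this
      have h83 : (8 : ℤ_[2]) = 2 * (2 * 2) := by norm_num
      rw [h83, norm_mul, norm_mul, h2]
      norm_num
    obtain ⟨z, hz, -⟩ := hensels_lemma hn
    refine ⟨2, 1, 1, (z : ℚ_[2]), ?_⟩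
    have hz' : (z : ℚ_[2]) ^ 2 + 7 = 0 := by
      have h0 : (z ^ 2 + 7 : ℤ_[2]) = 0 := by simpa using hz
      exact_mod_cast congrArg (fun t : ℤ_[2] => (t : ℚ_[2])) h0
    linear_combination hz'
  · -- p odd
    obtain ⟨a, b, hab⟩ := ZMod.sq_add_sq p (-1)
    have hfield : (Fact p.Prime) := hp
    have hne : a ≠ 0 ∨ b ≠ 0 := by
      by_contra h
      push_neg at h
      rw [h.1, h.2] at hab
      have : (1 : ZMod p) = 0 := by linear_combination hab
      exact one_ne_zero this
    -- reduce to the case a ≠ 0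
    obtain ⟨a, b, ha, hab⟩ : ∃ a b : ZMod p, a ≠ 0 ∧ a ^ 2 + b ^ 2 = -1 := by
      rcases hne with ha | hb
      · exact ⟨a, b, ha, hab⟩
      · exact ⟨b, a, hb, by linear_combination hab⟩
    -- lift to ℤ_[p]
    set a₀ : ℤ_[p] := (a.val : ℤ_[p]) with ha₀
    set b₀ : ℤ_[p] := (b.val : ℤ_[p]) with hb₀
    have hta : PadicInt.toZMod a₀ = a := by
      simp [ha₀, map_natCast, ZMod.natCast_val, ZMod.cast_id]
    have htb : PadicInt.toZMod b₀ = b := by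
      simp [hb₀, map_natCast, ZMod.natCast_val, ZMod.cast_id]
    have hker : ∀ x : ℤ_[p], PadicInt.toZMod x = 0 ↔ ‖x‖ < 1 := by
      intro x
      rw [← RingHom.mem_ker, PadicInt.ker_toZMod, IsLocalRing.mem_maximalIdeal,
        mem_nonunits_iff, PadicInt.not_isUnit_iff]
    have h2a : (2 : ZMod p) ≠ 0 := by
      intro h
      have : (p : ℕ) ∣ 2 := by
        have := (ZMod.natCast_eq_zero_iff 2 p).mp (by exact_mod_cast h)
        exact this
      exact hp2 ((Nat.prime_dvd_prime_iff_eq hp.out Nat.prime_two).mp this)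
    have hn : ‖(X ^ 2 + C (b₀ ^ 2 + 1) : Polynomial ℤ_[p]).eval a₀‖ <
        ‖(X ^ 2 + C (b₀ ^ 2 + 1) : Polynomial ℤ_[p]).derivative.eval a₀‖ ^ 2 := by
      have he : ((X ^ 2 + C (b₀ ^ 2 + 1) : Polynomial ℤ_[p]).eval a₀) = a₀ ^ 2 + b₀ ^ 2 + 1 := by
        simp; ring
      have hd : ((X ^ 2 + C (b₀ ^ 2 + 1) : Polynomial ℤ_[p]).derivative.eval a₀) = 2 * a₀ := by
        simp [derivative_X_pow, derivative_pow]
      rw [he, hd]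
      have h1 : ‖a₀ ^ 2 + b₀ ^ 2 + 1‖ < 1 := by
        rw [← hker]
        simp [map_add, map_pow, hta, htb, hab]
      have h2 : ‖2 * a₀‖ = 1 := by
        rw [← PadicInt.isUnit_iff]
        by_contra h
        rw [PadicInt.not_isUnit_iff, ← hker] at h
        rw [map_mul, hta, map_ofNat] at h
        exact (mul_ne_zero h2a ha) h
      rw [h2]
      simpa using h1
    obtain ⟨z, hz, -⟩ := hensels_lemma hn
    refine ⟨(z : ℚ_[p]), (b₀ : ℚ_[p]), 0, 0, ?_⟩
    have h0 : (z ^ 2 + (b₀ ^ 2 + 1) : ℤ_[p]) = 0 := by simpa using hz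
    have h0' : ((z : ℚ_[p]) ^ 2 + ((b₀ : ℚ_[p]) ^ 2 + 1)) = 0 := by
      exact_mod_cast congrArg (fun t : ℤ_[p] => (t : ℚ_[p])) h0
    linear_combination h0'

theorem sum_four_squares_equiv_neg_sum_four_squares_padic (p : ℕ) [Fact p.Prime] :
    (QuadraticMap.weightedSumSquares ℚ_[p] (fun _ : Fin 4 => (1 : ℚ_[p]))).Equivalent
      (QuadraticMap.weightedSumSquares ℚ_[p] (fun _ : Fin 4 => (-1 : ℚ_[p]))) := by
  obtain ⟨a, b, c, d, h⟩ := exists_sum_four_squares_eq_neg_one p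
  set M : Matrix (Fin 4) (Fin 4) ℚ_[p] :=
    !![a, b, c, d; -b, a, -d, c; -c, d, a, -b; -d, -c, b, a] with hM
  set N : Matrix (Fin 4) (Fin 4) ℚ_[p] :=
    !![-a, b, c, d; -b, -a, -d, c; -c, d, -a, -b; -d, -c, b, -a] with hN
  have hNM : N * M = 1 := by
    ext i j
    fin_cases i <;> fin_cases j <;>
      simp [hM, hN, Matrix.mul_apply, Fin.sum_univ_four] <;>
      (first | ring1 | linear_combination -h)
  have hMN : M * N = 1 := by
    ext i j
    fin_cases i <;> fin_cases j <;>
      simp [hM, hN, Matrix.mul_apply, Fin.sum_univ_four] <;>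
      (first | ring1 | linear_combination -h)
  refine ⟨⟨Matrix.toLin'OfInv hNM hMN, fun x => ?_⟩⟩
  simp only [Matrix.toLin'OfInv, Matrix.toLin'_apply, QuadraticMap.weightedSumSquares_apply,
    Matrix.mulVec, dotProduct, Fin.sum_univ_four, smul_eq_mul, hM]
  simp [Matrix.cons_val_zero, Matrix.cons_val_one, Matrix.head_cons]
  linear_combination (-(x 0 ^ 2 + x 1 ^ 2 + x 2 ^ 2 + x 3 ^ 2)) * h
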